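/- There exists an absolute constant C > 1 such that for every t ≥ 1 and every symmetric positive semidefinite Σ ∈ ℝ^{p×p} with σ₁ := ‖Σ‖_op ≤ 1, the following hold for the contour C_t: (i) for every z ∈ C_t, the matrix Σ − zI_p is invertible and ‖Σ_t^{1/2}(Σ − zI_p)⁻¹Σ_t^{1/2}‖_op ≤ C; (ii) the contour integral of arclength satisfies ∮_{C_t} |dz|/|z + t⁻¹| ≤ C·(1 + log t), so that if a function φ_t holomorphic on a neighborhood of C_t satisfies |φ_t(z)| ≤ C₁/|z + t⁻¹| on C_t then ∮_{C_t} |φ_t(z)||dz| ≤ C·C₁·(1 + log t); (iii) if moreover Σ̂ ∈ ℝ^{p×p} is symmetric positive semidefinite with ‖Σ_t^{−1/2}(Σ̂ − Σ)Σ_t^{−1/2}‖_op ≤ □ for some □ < 1/9, then for every z ∈ C_t, Σ̂ − zI_p is invertible and ‖Σ_t^{1/2}(Σ̂ − zI_p)⁻¹Σ_t^{1/2}‖_op ≤ C. -/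

import Mathlib

open Matrix MeasureTheory

namespace SpecFSD10

noncomputable def l2norm {n : ℕ} (v : Fin n → ℝ) : ℝ := Real.sqrt (∑ i, v i ^ 2)

noncomputable def opNorm {m n : ℕ} (A : Matrix (Fin m) (Fin n) ℝ) : ℝ :=
  sSup ((fun v => l2norm (A.mulVec v)) '' {v : Fin n → ℝ | l2norm v ≤ 1})

noncomputable def l2normC {n : ℕ} (v : Fin n → ℂ) : ℝ := Real.sqrt (∑ i, ‖v i‖ ^ 2)

noncomputable def opNormC {m n : ℕ} (A : Matrix (Fin m) (Fin n) ℂ) : ℝ :=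
  sSup ((fun v => l2normC (A.mulVec v)) '' {v : Fin n → ℂ | l2normC v ≤ 1})

def ONFamily {p : ℕ} (e : Fin p → Fin p → ℝ) : Prop :=
  (∀ j, ∑ i, e j i * e j i = 1) ∧ ∀ j k, j ≠ k → ∑ i, e j i * e k i = 0

noncomputable def specMat {p : ℕ} (e : Fin p → Fin p → ℝ) (c : Fin p → ℝ) :
    Matrix (Fin p) (Fin p) ℝ :=
  ∑ j, c j • Matrix.vecMulVec (e j) (e j)

/-- The contour `C_t`: two segments `{x ± L(x)i : x ∈ [−1/(2t), σ₁]}` with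
`L(x) = α(x + 1/(2t))`, `α = 5(σ₁+t⁻¹)/(σ₁+t⁻¹/2)`, together with the right half-circle
`{z : |z − σ₁| = 5(σ₁+t⁻¹), Re z ≥ σ₁}`. -/
noncomputable def contourSet (t s1 : ℝ) : Set ℂ :=
  (fun x : ℝ => (x : ℂ) +
      ((5 * (s1 + t⁻¹) / (s1 + t⁻¹ / 2)) * (x + 1 / (2 * t)) : ℝ) * Complex.I) ''
      Set.Icc (-(1 / (2 * t))) s1 ∪
    (fun x : ℝ => (x : ℂ) -
      ((5 * (s1 + t⁻¹) / (s1 + t⁻¹ / 2)) * (x + 1 / (2 * t)) : ℝ) * Complex.I) ''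
      Set.Icc (-(1 / (2 * t))) s1 ∪
    {z : ℂ | ‖z - (s1 : ℂ)‖ = 5 * (s1 + t⁻¹) ∧ s1 ≤ z.re}

/-- The arclength integral `∮_{C_t} h(z) |dz|`, computed with the natural
parametrizations of the three pieces of `C_t` (the two segments have speed
`√(1+α²)` and the half-circle has speed `5(σ₁+t⁻¹)`). -/
noncomputable def contourIntegralAbs (t s1 : ℝ) (h : ℂ → ℝ) : ℝ :=
  (∫ x in (-(1 / (2 * t)))..s1,
      h ((x : ℂ) + ((5 * (s1 + t⁻¹) / (s1 + t⁻¹ / 2)) * (x + 1 / (2 * t)) : ℝ) *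
          Complex.I) * Real.sqrt (1 + (5 * (s1 + t⁻¹) / (s1 + t⁻¹ / 2)) ^ 2)) +
    (∫ x in (-(1 / (2 * t)))..s1,
      h ((x : ℂ) - ((5 * (s1 + t⁻¹) / (s1 + t⁻¹ / 2)) * (x + 1 / (2 * t)) : ℝ) *
          Complex.I) * Real.sqrt (1 + (5 * (s1 + t⁻¹) / (s1 + t⁻¹ / 2)) ^ 2)) +
    ∫ θ in (-(Real.pi / 2))..(Real.pi / 2),
      h ((s1 : ℂ) + ((5 * (s1 + t⁻¹) : ℝ) : ℂ) * Complex.exp ((θ : ℂ) * Complex.I)) *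
        (5 * (s1 + t⁻¹))


lemma l2norm_nonneg {n : ℕ} (v : Fin n → ℝ) : 0 ≤ l2norm v := Real.sqrt_nonneg _
lemma l2normC_nonneg {n : ℕ} (v : Fin n → ℂ) : 0 ≤ l2normC v := Real.sqrt_nonneg _

lemma l2norm_zero {n : ℕ} : l2norm (0 : Fin n → ℝ) = 0 := by
  simp [l2norm]

lemma l2normC_zero {n : ℕ} : l2normC (0 : Fin n → ℂ) = 0 := by
  simp [l2normC]

lemma l2norm_sq {n : ℕ} (v : Fin n → ℝ) : l2norm v ^ 2 = ∑ i, v i ^ 2 := by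
  rw [l2norm, Real.sq_sqrt]; positivity

lemma l2normC_sq {n : ℕ} (v : Fin n → ℂ) : l2normC v ^ 2 = ∑ i, ‖v i‖ ^ 2 := by
  rw [l2normC, Real.sq_sqrt]; positivity

lemma l2normC_eq_zero {n : ℕ} {v : Fin n → ℂ} (h : l2normC v = 0) : v = 0 := by
  have h2 : ∑ i, ‖v i‖ ^ 2 = 0 := by
    have := l2normC_sq v; rw [h] at this; simpa using this.symm
  funext i
  have := (Finset.sum_eq_zero_iff_of_nonneg (fun i _ => by positivity)).mp h2 i (by simp)
  simpa using this

lemma l2norm_smul {n : ℕ} (r : ℝ) (v : Fin n → ℝ) : l2norm (r • v) = |r| * l2norm v := by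
  simp only [l2norm, Pi.smul_apply, smul_eq_mul, mul_pow, ← Finset.mul_sum]
  rw [Real.sqrt_mul (by positivity), Real.sqrt_sq_eq_abs]

lemma l2normC_smul_real {n : ℕ} (r : ℝ) (v : Fin n → ℂ) :
    l2normC ((r : ℂ) • v) = |r| * l2normC v := by
  simp only [l2normC, Pi.smul_apply, smul_eq_mul, norm_mul, mul_pow, ← Finset.mul_sum,
    Complex.norm_real, Real.norm_eq_abs]
  rw [Real.sqrt_mul (by positivity), Real.sqrt_sq_eq_abs, abs_abs]

/-- Crude Frobenius bound. -/
lemma l2norm_mulVec_le_frob {m n : ℕ} (A : Matrix (Fin m) (Fin n) ℝ) (v : Fin n → ℝ) :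
    l2norm (A.mulVec v) ≤ Real.sqrt (∑ i, ∑ j, A i j ^ 2) * l2norm v := by
  rw [l2norm, l2norm, ← Real.sqrt_mul (by positivity)]
  apply Real.sqrt_le_sqrt
  rw [Finset.sum_mul]
  apply Finset.sum_le_sum
  intro i _
  calc (A.mulVec v i) ^ 2 = (∑ j, A i j * v j) ^ 2 := by rfl
    _ ≤ (∑ j, A i j ^ 2) * (∑ j, v j ^ 2) := Finset.sum_mul_sq_le_sq_mul_sq _ _ _


lemma opNorm_bddAbove {m n : ℕ} (A : Matrix (Fin m) (Fin n) ℝ) :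
    BddAbove ((fun v => l2norm (A.mulVec v)) '' {v : Fin n → ℝ | l2norm v ≤ 1}) := by
  refine ⟨Real.sqrt (∑ i, ∑ j, A i j ^ 2), ?_⟩
  rintro y ⟨v, hv, rfl⟩
  calc l2norm (A.mulVec v) ≤ Real.sqrt (∑ i, ∑ j, A i j ^ 2) * l2norm v :=
        l2norm_mulVec_le_frob A v
    _ ≤ Real.sqrt (∑ i, ∑ j, A i j ^ 2) * 1 := by
        exact mul_le_mul_of_nonneg_left hv (Real.sqrt_nonneg _)
    _ = _ := mul_one _

lemma opNorm_nonneg {m n : ℕ} (A : Matrix (Fin m) (Fin n) ℝ) : 0 ≤ opNorm A := by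
  have h0 : (0:ℝ) ∈ (fun v => l2norm (A.mulVec v)) '' {v : Fin n → ℝ | l2norm v ≤ 1} := by
    refine ⟨0, by simp [l2norm_zero], by simp [l2norm_zero]⟩
  exact le_csSup (opNorm_bddAbove A) h0

lemma l2norm_mulVec_le {m n : ℕ} (A : Matrix (Fin m) (Fin n) ℝ) (v : Fin n → ℝ) :
    l2norm (A.mulVec v) ≤ opNorm A * l2norm v := by
  rcases eq_or_lt_of_le (l2norm_nonneg v) with h | h
  · have hv : v = 0 := by
      funext i
      have h2 : ∑ i, v i ^ 2 = 0 := by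
        have := l2norm_sq v; rw [← h] at this; simpa using this.symm
      have := (Finset.sum_eq_zero_iff_of_nonneg (fun i _ => by positivity)).mp h2 i (by simp)
      simpa [pow_eq_zero_iff] using this
    simp [hv, l2norm_zero, ← h, Matrix.mulVec_zero]
  · set c := l2norm v with hc
    have hmem : (l2norm v)⁻¹ • v ∈ {v : Fin n → ℝ | l2norm v ≤ 1} := by
      simp only [Set.mem_setOf_eq, l2norm_smul]
      rw [abs_of_pos (inv_pos.mpr (show 0 < l2norm v from h)),
        inv_mul_cancel₀ (ne_of_gt (show 0 < l2norm v from h))]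
    have this0 := le_csSup (opNorm_bddAbove A) ⟨_, hmem, rfl⟩
    have this : l2norm (A.mulVec ((l2norm v)⁻¹ • v)) ≤ opNorm A := this0
    rw [Matrix.mulVec_smul, l2norm_smul, abs_of_pos (inv_pos.mpr h)] at this
    calc l2norm (A.mulVec v) = c * (c⁻¹ * l2norm (A.mulVec v)) := by
          field_simp
    _ ≤ c * opNorm A := by exact mul_le_mul_of_nonneg_left this (le_of_lt h)
    _ = opNorm A * c := mul_comm _ _

lemma opNormC_le {m n : ℕ} (A : Matrix (Fin m) (Fin n) ℂ) {M : ℝ} (hM : 0 ≤ M)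
    (h : ∀ v, l2normC (A.mulVec v) ≤ M * l2normC v) : opNormC A ≤ M := by
  apply csSup_le
  · exact ⟨0, ⟨0, by simp [l2normC_zero], by simp [Matrix.mulVec_zero, l2normC_zero]⟩⟩
  · rintro y ⟨v, hv, rfl⟩
    calc l2normC (A.mulVec v) ≤ M * l2normC v := h v
      _ ≤ M * 1 := mul_le_mul_of_nonneg_left hv hM
      _ = M := mul_one M

lemma key {k : ℕ} (w : Fin k → ℂ) : l2normC w ^ 2
    = l2norm (fun i => (w i).re) ^ 2 + l2norm (fun i => (w i).im) ^ 2 := by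
  rw [l2normC_sq, l2norm_sq, l2norm_sq, ← Finset.sum_add_distrib]
  congr 1; funext i
  rw [Complex.sq_norm, Complex.normSq_apply]; ring

/-- Complexification preserves pointwise operator bounds. -/
lemma l2normC_map_mulVec_le {m n : ℕ} (A : Matrix (Fin m) (Fin n) ℝ) (v : Fin n → ℂ) :
    l2normC ((A.map (fun x : ℝ => (x : ℂ))).mulVec v) ≤ opNorm A * l2normC v := by
  have hre : ∀ i, ((A.map (fun x : ℝ => (x : ℂ))).mulVec v i).re
      = A.mulVec (fun j => (v j).re) i := by
    intro i
    simp [Matrix.mulVec, dotProduct, Complex.re_sum, Matrix.map_apply]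
  have him : ∀ i, ((A.map (fun x : ℝ => (x : ℂ))).mulVec v i).im
      = A.mulVec (fun j => (v j).im) i := by
    intro i
    simp [Matrix.mulVec, dotProduct, Complex.im_sum, Matrix.map_apply]
  have h1 : l2norm (A.mulVec fun j => (v j).re) ≤ opNorm A * l2norm (fun j => (v j).re) :=
    l2norm_mulVec_le A _
  have h2 : l2norm (A.mulVec fun j => (v j).im) ≤ opNorm A * l2norm (fun j => (v j).im) :=
    l2norm_mulVec_le A _
  have hsq : l2normC ((A.map (fun x : ℝ => (x : ℂ))).mulVec v) ^ 2
      ≤ (opNorm A * l2normC v) ^ 2 := by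
    rw [key]
    simp only [hre, him]
    have e2 : (opNorm A * l2normC v) ^ 2
        = opNorm A ^2 * (l2norm (fun j => (v j).re) ^ 2 + l2norm (fun j => (v j).im) ^ 2) := by
      rw [mul_pow, key]
      
    rw [e2, mul_add]
    gcongr
    · calc l2norm (A.mulVec fun j => (v j).re) ^ 2
          ≤ (opNorm A * l2norm (fun j => (v j).re)) ^ 2 := by
            apply pow_le_pow_left₀ (l2norm_nonneg _) h1
      _ = _ := by rw [mul_pow]
    · calc l2norm (A.mulVec fun j => (v j).im) ^ 2
          ≤ (opNorm A * l2norm (fun j => (v j).im)) ^ 2 := by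
            apply pow_le_pow_left₀ (l2norm_nonneg _) h2
      _ = _ := by rw [mul_pow]
  exact le_of_pow_le_pow_left₀ two_ne_zero (mul_nonneg (opNorm_nonneg A) (l2normC_nonneg v)) hsq


variable {p : ℕ}

/-- Complex spectral matrix. -/
noncomputable def specC (e : Fin p → Fin p → ℝ) (c : Fin p → ℂ) : Matrix (Fin p) (Fin p) ℂ :=
  ∑ j, c j • Matrix.vecMulVec (fun i => (e j i : ℂ)) (fun i => (e j i : ℂ))

lemma specC_apply (e : Fin p → Fin p → ℝ) (c : Fin p → ℂ) (i k : Fin p) :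
    specC e c i k = ∑ j, c j * ((e j i : ℂ) * (e j k : ℂ)) := by
  simp [specC, Matrix.sum_apply, Matrix.vecMulVec_apply]

lemma map_specMat (e : Fin p → Fin p → ℝ) (c : Fin p → ℝ) :
    (specMat e c).map (fun x : ℝ => (x : ℂ)) = specC e (fun j => (c j : ℂ)) := by
  ext i k
  simp [specMat, specC, Matrix.map_apply, Matrix.sum_apply, Matrix.vecMulVec_apply]

lemma specC_dot (e : Fin p → Fin p → ℝ) (he : ONFamily e) (j k : Fin p) :
    ∑ i, (e j i : ℂ) * (e k i : ℂ) = if j = k then 1 else 0 := by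
  have : ((∑ i, e j i * e k i : ℝ) : ℂ) = if j = k then 1 else 0 := by
    rcases eq_or_ne j k with rfl | h
    · rw [he.1 j]; simp
    · rw [he.2 j k h]; simp [h]
  rw [← this]
  push_cast
  rfl

lemma specC_mul (e : Fin p → Fin p → ℝ) (he : ONFamily e) (c d : Fin p → ℂ) :
    specC e c * specC e d = specC e (fun j => c j * d j) := by
  ext i k
  rw [Matrix.mul_apply]
  simp only [specC_apply]
  have expand : ∀ x, (∑ j, c j * ((e j i : ℂ) * (e j x : ℂ))) *
      (∑ j', d j' * ((e j' x : ℂ) * (e j' k : ℂ)))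
      = ∑ j, ∑ j', (c j * d j' * ((e j i : ℂ) * (e j' k : ℂ))) *
          ((e j x : ℂ) * (e j' x : ℂ)) := by
    intro x
    rw [Finset.sum_mul_sum]
    apply Finset.sum_congr rfl; intro j _
    apply Finset.sum_congr rfl; intro j' _
    ring
  calc ∑ x, (∑ j, c j * ((e j i : ℂ) * (e j x : ℂ))) *
        (∑ j', d j' * ((e j' x : ℂ) * (e j' k : ℂ)))
      = ∑ j, ∑ j', (c j * d j' * ((e j i : ℂ) * (e j' k : ℂ))) *
          ∑ x, (e j x : ℂ) * (e j' x : ℂ) := by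
        simp only [expand, Finset.mul_sum]
        rw [Finset.sum_comm]
        apply Finset.sum_congr rfl; intro j _
        rw [Finset.sum_comm]
    _ = ∑ j, c j * d j * ((e j i : ℂ) * (e j k : ℂ)) := by
        apply Finset.sum_congr rfl; intro j _
        simp only [specC_dot e he, mul_ite, mul_one, mul_zero]
        simp

/-- Row-matrix of the family. -/
noncomputable def Ec (e : Fin p → Fin p → ℝ) : Matrix (Fin p) (Fin p) ℂ :=
  Matrix.of fun j i => (e j i : ℂ)

lemma Ec_mul_transpose (e : Fin p → Fin p → ℝ) (he : ONFamily e) :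
    Ec e * (Ec e)ᵀ = 1 := by
  ext j k
  rw [Matrix.mul_apply]
  simp only [Ec, Matrix.transpose_apply, Matrix.of_apply]
  rw [specC_dot e he j k]
  simp [Matrix.one_apply]

lemma transpose_mul_Ec (e : Fin p → Fin p → ℝ) (he : ONFamily e) :
    (Ec e)ᵀ * Ec e = 1 :=
  mul_eq_one_comm.mp (Ec_mul_transpose e he)

lemma specC_one (e : Fin p → Fin p → ℝ) (he : ONFamily e) :
    specC e (fun _ => 1) = 1 := by
  have h := transpose_mul_Ec e he
  rw [← h]
  ext i k
  rw [Matrix.mul_apply, specC_apply]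
  simp [Ec, mul_comm]

lemma smul_one_eq_specC (e : Fin p → Fin p → ℝ) (he : ONFamily e) (z : ℂ) :
    z • (1 : Matrix (Fin p) (Fin p) ℂ) = specC e (fun _ => z) := by
  rw [← specC_one e he, specC]
  rw [specC, Finset.smul_sum]
  apply Finset.sum_congr rfl; intro j _
  rw [smul_smul, mul_one]

lemma specC_sub (e : Fin p → Fin p → ℝ) (c d : Fin p → ℂ) :
    specC e c - specC e d = specC e (fun j => c j - d j) := by
  rw [specC, specC, specC, ← Finset.sum_sub_distrib]
  apply Finset.sum_congr rfl; intro j _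
  rw [sub_smul]

lemma specC_add (e : Fin p → Fin p → ℝ) (c d : Fin p → ℂ) :
    specC e c + specC e d = specC e (fun j => c j + d j) := by
  rw [specC, specC, specC, ← Finset.sum_add_distrib]
  apply Finset.sum_congr rfl; intro j _
  rw [add_smul]

lemma specC_mulVec (e : Fin p → Fin p → ℝ) (c : Fin p → ℂ) (v : Fin p → ℂ) :
    (specC e c).mulVec v = (Ec e)ᵀ.mulVec (fun j => c j * ((Ec e).mulVec v j)) := by
  funext i
  simp only [Matrix.mulVec, dotProduct, specC_apply, Ec, Matrix.transpose_apply,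
    Matrix.of_apply, Finset.sum_mul, Finset.mul_sum]
  rw [Finset.sum_comm]
  apply Finset.sum_congr rfl; intro j _
  apply Finset.sum_congr rfl; intro x _
  ring

/-- Parseval for matrices with `Mᴴ * M = 1`, real entries. -/
lemma l2normC_isometry {M : Matrix (Fin p) (Fin p) ℂ} (hreal : ∀ i j, (M i j).im = 0)
    (h : Mᴴ * M = 1) (v : Fin p → ℂ) : l2normC (M.mulVec v) = l2normC v := by
  have habs : ∀ w : Fin p → ℂ, (∑ i, ‖w i‖ ^ 2 : ℝ)
      = ((dotProduct (star w) w)).re := by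
    intro w
    rw [dotProduct, Complex.re_sum]
    apply Finset.sum_congr rfl; intro i _
    simp only [Pi.star_apply, RCLike.star_def]
    rw [← Complex.normSq_eq_conj_mul_self]
    simp [Complex.sq_norm]
  have hdot : dotProduct (star (M.mulVec v)) (M.mulVec v)
      = dotProduct (star v) v := by
    rw [Matrix.star_mulVec]
    rw [dotProduct_mulVec, Matrix.vecMul_vecMul, h, Matrix.vecMul_one]
  rw [l2normC, l2normC, habs, habs, hdot]

lemma conjTranspose_real {M : Matrix (Fin p) (Fin p) ℂ} (hreal : ∀ i j, (M i j).im = 0) :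
    Mᴴ = Mᵀ := by
  ext i j
  simp only [Matrix.conjTranspose_apply, Matrix.transpose_apply]
  exact Complex.conj_eq_iff_im.mpr (hreal j i)

lemma Ec_real (e : Fin p → Fin p → ℝ) : ∀ i j, ((Ec e) i j).im = 0 := by
  intro i j; simp [Ec]

lemma l2normC_Ec (e : Fin p → Fin p → ℝ) (he : ONFamily e) (v : Fin p → ℂ) :
    l2normC ((Ec e).mulVec v) = l2normC v := by
  apply l2normC_isometry (Ec_real e)
  rw [conjTranspose_real (Ec_real e)]
  exact transpose_mul_Ec e he

lemma l2normC_EcT (e : Fin p → Fin p → ℝ) (he : ONFamily e) (v : Fin p → ℂ) :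
    l2normC ((Ec e)ᵀ.mulVec v) = l2normC v := by
  have hreal : ∀ i j, ((Ec e)ᵀ i j).im = 0 := fun i j => Ec_real e j i
  apply l2normC_isometry hreal
  rw [conjTranspose_real hreal, Matrix.transpose_transpose]
  exact Ec_mul_transpose e he

/-- The diagonal bound: `‖specC e c v‖ ≤ (max |c|) ‖v‖` pointwise. -/
lemma specC_mulVec_le (e : Fin p → Fin p → ℝ) (he : ONFamily e) (c : Fin p → ℂ) {M : ℝ}
    (hM : ∀ j, ‖c j‖ ≤ M) (v : Fin p → ℂ) :
    l2normC ((specC e c).mulVec v) ≤ M * l2normC v := by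
  rcases Nat.eq_zero_or_pos p with hp | hp
  · subst hp
    simp [l2normC]
  have hM0 : 0 ≤ M := le_trans (norm_nonneg _) (hM ⟨0, hp⟩)
  rw [specC_mulVec, l2normC_EcT e he]
  set w := (Ec e).mulVec v with hw
  have hwv : l2normC w = l2normC v := l2normC_Ec e he v
  rw [← hwv]
  have h1 : l2normC (fun j => c j * w j) ^ 2 ≤ (M * l2normC w) ^ 2 := by
    rw [l2normC_sq, mul_pow, l2normC_sq, Finset.mul_sum]
    apply Finset.sum_le_sum
    intro j _
    rw [show ‖c j * w j‖ = ‖c j‖ * ‖w j‖ from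
      norm_mul _ _, mul_pow]
    apply mul_le_mul_of_nonneg_right _ (by positivity)
    exact pow_le_pow_left₀ (norm_nonneg _) (hM j) 2
  exact le_of_pow_le_pow_left₀ two_ne_zero (mul_nonneg hM0 (l2normC_nonneg w)) h1


lemma alpha_ge_one {t s1 : ℝ} (ht : 1 ≤ t) (hs1 : 0 ≤ s1) :
    1 ≤ 5 * (s1 + t⁻¹) / (s1 + t⁻¹ / 2) := by
  have htinv : 0 < t⁻¹ := by positivity
  rw [le_div_iff₀ (by linarith)]
  linarith

lemma alpha_le_ten {t s1 : ℝ} (ht : 1 ≤ t) (hs1 : 0 ≤ s1) :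
    5 * (s1 + t⁻¹) / (s1 + t⁻¹ / 2) ≤ 10 := by
  have htinv : 0 < t⁻¹ := by positivity
  rw [div_le_iff₀ (by linarith)]
  linarith

/-- KEY distance bound: every contour point stays `(σ+t⁻¹)/4`-away from each
eigenvalue `σ ∈ [0, s1]`. -/
lemma key_dist {t s1 σ : ℝ} (ht : 1 ≤ t) (hσ0 : 0 ≤ σ) (hσ : σ ≤ s1) {z : ℂ}
    (hz : z ∈ contourSet t s1) : (σ + t⁻¹) / 4 ≤ ‖(σ : ℂ) - z‖ := by
  have ht0 : 0 < t := lt_of_lt_of_le one_pos ht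
  have htinv : 0 < t⁻¹ := by positivity
  have hs1 : 0 ≤ s1 := le_trans hσ0 hσ
  have hα := alpha_ge_one ht hs1
  set α := 5 * (s1 + t⁻¹) / (s1 + t⁻¹ / 2) with hαdef
  have hseg : ∀ x : ℝ, x ∈ Set.Icc (-(1 / (2 * t))) s1 → ∀ s : ℝ, |s| = 1 →
      (σ + t⁻¹) / 4 ≤ ‖(σ : ℂ) - ((x : ℂ) + ((s * (α * (x + 1 / (2 * t)))) : ℝ) * Complex.I)‖ := by
    intro x hx s hs
    set u := x + 1 / (2 * t) with hu
    have hu0 : 0 ≤ u := by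
      have := hx.1
      simp only [hu]; linarith
    have habs_re : |((σ : ℂ) - ((x : ℂ) + ((s * (α * u)) : ℝ) * Complex.I)).re| ≤
        ‖(σ : ℂ) - ((x : ℂ) + ((s * (α * u)) : ℝ) * Complex.I)‖ :=
      Complex.abs_re_le_norm _
    have habs_im : |((σ : ℂ) - ((x : ℂ) + ((s * (α * u)) : ℝ) * Complex.I)).im| ≤
        ‖(σ : ℂ) - ((x : ℂ) + ((s * (α * u)) : ℝ) * Complex.I)‖ :=
      Complex.abs_im_le_norm _
    have hre : ((σ : ℂ) - ((x : ℂ) + ((s * (α * u)) : ℝ) * Complex.I)).re = σ - x := by simp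
    have him : ((σ : ℂ) - ((x : ℂ) + ((s * (α * u)) : ℝ) * Complex.I)).im = -(s * (α * u)) := by
      simp
    rcases le_or_gt ((σ + t⁻¹) / 4) u with hcase | hcase
    · -- imaginary part is large
      refine le_trans ?_ habs_im
      rw [him, abs_neg, abs_mul, hs, one_mul, abs_of_nonneg (by positivity)]
      calc (σ + t⁻¹) / 4 ≤ u := hcase
        _ ≤ α * u := le_mul_of_one_le_left hu0 hα
    · -- real part is large
      refine le_trans ?_ habs_re
      rw [hre]
      have hx' : x = u - 1 / (2 * t) := by rw [hu]; ring
      have : (σ + t⁻¹) / 4 ≤ σ - x := by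
        rw [hx']
        have h2t : 1 / (2 * t) = t⁻¹ / 2 := by field_simp
        rw [h2t]
        linarith
      exact le_trans this (le_abs_self _)
  rcases hz with (⟨x, hx, rfl⟩ | ⟨x, hx, rfl⟩) | ⟨hcirc, hre⟩
  · have h1 := hseg x hx 1 (by norm_num)
    show (σ + t⁻¹) / 4 ≤
      ‖(σ : ℂ) - ((x : ℂ) + ((α * (x + 1 / (2 * t))) : ℝ) * Complex.I)‖
    have heq : ((x : ℂ) + (((1 : ℝ) * (α * (x + 1 / (2 * t)))) : ℝ) * Complex.I)
        = ((x : ℂ) + ((α * (x + 1 / (2 * t))) : ℝ) * Complex.I) := by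
      push_cast; ring
    rw [heq] at h1
    exact h1
  · have h1 := hseg x hx (-1) (by norm_num)
    show (σ + t⁻¹) / 4 ≤
      ‖(σ : ℂ) - ((x : ℂ) - ((α * (x + 1 / (2 * t))) : ℝ) * Complex.I)‖
    have heq : ((x : ℂ) + (((-1 : ℝ) * (α * (x + 1 / (2 * t)))) : ℝ) * Complex.I)
        = ((x : ℂ) - ((α * (x + 1 / (2 * t))) : ℝ) * Complex.I) := by
      push_cast; ring
    rw [heq] at h1
    exact h1
  · -- circle part
    have h1 : ‖(s1 : ℂ) - (σ : ℂ)‖ = s1 - σ := by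
      rw [show ((s1 : ℂ) - (σ : ℂ)) = ((s1 - σ : ℝ) : ℂ) by push_cast; ring,
        Complex.norm_real, Real.norm_eq_abs, abs_of_nonneg (by linarith)]
    have htri : ‖z - (s1 : ℂ)‖ ≤ ‖(σ : ℂ) - z‖ +
        ‖(s1 : ℂ) - (σ : ℂ)‖ := by
      calc ‖z - (s1 : ℂ)‖ = ‖-(((σ : ℂ) - z) + ((s1 : ℂ) - (σ : ℂ)))‖ := by
            ring_nf
      _ = ‖((σ : ℂ) - z) + ((s1 : ℂ) - (σ : ℂ))‖ := by rw [norm_neg]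
      _ ≤ _ := norm_add_le _ _
    rw [hcirc, h1] at htri
    linarith

lemma key_ne {t s1 σ : ℝ} (ht : 1 ≤ t) (hσ0 : 0 ≤ σ) (hσ : σ ≤ s1) {z : ℂ}
    (hz : z ∈ contourSet t s1) : (σ : ℂ) ≠ z := by
  have ht0 : 0 < t := lt_of_lt_of_le one_pos ht
  have h := key_dist ht hσ0 hσ hz
  intro hc
  rw [hc, sub_self, norm_zero] at h
  have : 0 < (σ + t⁻¹) / 4 := by positivity
  linarith

lemma key_ratio {t s1 σ : ℝ} (ht : 1 ≤ t) (hσ0 : 0 ≤ σ) (hσ : σ ≤ s1) {z : ℂ}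
    (hz : z ∈ contourSet t s1) :
    ‖(σ + t⁻¹ : ℝ) / ((σ : ℂ) - z)‖ ≤ 4 := by
  have ht0 : 0 < t := lt_of_lt_of_le one_pos ht
  have h := key_dist ht hσ0 hσ hz
  rw [norm_div, Complex.norm_real, Real.norm_eq_abs, abs_of_nonneg (by positivity)]
  have hpos : 0 < ‖(σ : ℂ) - z‖ :=
    lt_of_lt_of_le (by positivity) h
  rw [div_le_iff₀ hpos]
  nlinarith [norm_nonneg ((σ : ℂ) - z)]


lemma seg_est {t s1 c : ℝ} (ht : 1 ≤ t) (hs0 : 0 ≤ s1) (hs1 : s1 ≤ 1)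
    (hc0 : 0 ≤ c) (hc : c ≤ 11) {g : ℝ → ℂ} (hg : Continuous g)
    (hre : ∀ x, (g x).re = x + t⁻¹) :
    ∫ x in (-(1 / (2 * t)))..s1, (1 / ‖g x‖) * c ≤ 33 * (1 + Real.log t) := by
  have ht0 : 0 < t := lt_of_lt_of_le one_pos ht
  have htinv : 0 < t⁻¹ := by positivity
  set a := -(1 / (2 * t)) with ha
  have hab : a ≤ s1 := by
    have : 0 < 1 / (2 * t) := by positivity
    simp only [ha]; linarith
  have hpos : ∀ x ∈ Set.Icc a s1, 0 < x + t⁻¹ := by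
    intro x hx
    have h1 : -(1 / (2 * t)) ≤ x := hx.1
    have h2 : -(1 / (2 * t)) + t⁻¹ = 1 / (2 * t) := by field_simp; ring
    have h3 : 0 < 1 / (2 * t) := by positivity
    linarith
  have habs : ∀ x ∈ Set.Icc a s1, x + t⁻¹ ≤ ‖g x‖ := by
    intro x hx
    calc x + t⁻¹ = (g x).re := (hre x).symm
      _ ≤ |(g x).re| := le_abs_self _
      _ ≤ ‖g x‖ := Complex.abs_re_le_norm _
  have hptwise : ∀ x ∈ Set.Icc a s1,
      (1 / ‖g x‖) * c ≤ (1 / (x + t⁻¹)) * c := by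
    intro x hx
    apply mul_le_mul_of_nonneg_right _ hc0
    apply one_div_le_one_div_of_le (hpos x hx) (habs x hx)
  have hcont1 : ContinuousOn (fun x => (1 / ‖g x‖) * c) (Set.Icc a s1) := by
    apply ContinuousOn.mul _ continuousOn_const
    apply ContinuousOn.div continuousOn_const
      ((continuous_norm.comp hg).continuousOn)
    intro x hx
    exact ne_of_gt (lt_of_lt_of_le (hpos x hx) (habs x hx))
  have hcont2 : ContinuousOn (fun x => (1 / (x + t⁻¹)) * c) (Set.Icc a s1) := by
    apply ContinuousOn.mul _ continuousOn_const
    apply ContinuousOn.div continuousOn_const (by fun_prop)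
    intro x hx
    exact ne_of_gt (hpos x hx)
  have hint1 : IntervalIntegrable _ MeasureTheory.volume a s1 :=
    hcont1.intervalIntegrable_of_Icc hab
  have hint2 : IntervalIntegrable _ MeasureTheory.volume a s1 :=
    hcont2.intervalIntegrable_of_Icc hab
  have hmono := intervalIntegral.integral_mono_on hab hint1 hint2 hptwise
  refine le_trans hmono ?_
  rw [intervalIntegral.integral_mul_const]
  have hsub : (∫ x in a..s1, 1 / (x + t⁻¹)) = ∫ y in (a + t⁻¹)..(s1 + t⁻¹), 1 / y := by
    rw [← intervalIntegral.integral_comp_add_right (fun y => 1 / y) t⁻¹]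
  have hainv : a + t⁻¹ = 1 / (2 * t) := by rw [ha]; field_simp; ring
  have hlo : 0 < 1 / (2 * t) := by positivity
  have hle : 1 / (2 * t) ≤ s1 + t⁻¹ := by
    have : 1 / (2 * t) ≤ t⁻¹ := by rw [one_div]; rw [mul_inv]; nlinarith [inv_pos.mpr ht0]
    linarith
  have hval : (∫ x in a..s1, 1 / (x + t⁻¹)) = Real.log ((s1 + t⁻¹) / (1 / (2 * t))) := by
    rw [hsub, hainv, integral_one_div]
    intro hmem
    rw [Set.uIcc_of_le hle] at hmem
    exact absurd hmem.1 (not_le.mpr hlo)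
  rw [hval]
  have harg : (s1 + t⁻¹) / (1 / (2 * t)) = (s1 + t⁻¹) * (2 * t) := by
    field_simp
  have hlog1 : Real.log ((s1 + t⁻¹) / (1 / (2 * t))) ≤ Real.log (4 * t) := by
    rw [harg]
    apply Real.log_le_log (by positivity)
    have : t⁻¹ * t = 1 := inv_mul_cancel₀ (ne_of_gt ht0)
    nlinarith
  have hlog2 : Real.log (4 * t) = Real.log 4 + Real.log t :=
    Real.log_mul (by norm_num) (ne_of_gt ht0)
  have hlog4 : Real.log 4 ≤ 3 := by
    have := Real.log_le_sub_one_of_pos (by norm_num : (0:ℝ) < 4)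
    linarith
  have hlogt : 0 ≤ Real.log t := Real.log_nonneg ht
  have hlognn : 0 ≤ Real.log ((s1 + t⁻¹) / (1 / (2 * t))) := by
    apply Real.log_nonneg
    rw [harg]
    have hinv : t⁻¹ * t = 1 := inv_mul_cancel₀ (ne_of_gt ht0)
    nlinarith [mul_nonneg hs0 (le_of_lt ht0)]
  nlinarith [mul_le_mul_of_nonneg_left (hlog1.trans (by linarith : Real.log (4*t) ≤ 3 + Real.log t)) hc0]

lemma circ_est {t s1 : ℝ} (ht : 1 ≤ t) (hs0 : 0 ≤ s1) :
    ∫ θ in (-(Real.pi / 2))..(Real.pi / 2),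
      (1 / ‖((s1 : ℂ) + ((5 * (s1 + t⁻¹) : ℝ) : ℂ) *
        Complex.exp ((θ : ℂ) * Complex.I)) + ((t⁻¹ : ℝ) : ℂ)‖) * (5 * (s1 + t⁻¹))
      ≤ 4 := by
  have ht0 : 0 < t := lt_of_lt_of_le one_pos ht
  have hr : 0 < s1 + t⁻¹ := by positivity
  have hab : -(Real.pi / 2) ≤ Real.pi / 2 := by
    have := Real.pi_pos; linarith
  have habs : ∀ θ : ℝ, 4 * (s1 + t⁻¹) ≤ ‖((s1 : ℂ) +
      ((5 * (s1 + t⁻¹) : ℝ) : ℂ) * Complex.exp ((θ : ℂ) * Complex.I)) + ((t⁻¹ : ℝ) : ℂ)‖ := by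
    intro θ
    have hexp : ‖((5 * (s1 + t⁻¹) : ℝ) : ℂ) * Complex.exp ((θ : ℂ) * Complex.I)‖
        = 5 * (s1 + t⁻¹) := by
      rw [norm_mul, Complex.norm_real, Real.norm_eq_abs, Complex.norm_exp]
      simp [abs_of_nonneg (by positivity : (0:ℝ) ≤ 5 * (s1 + t⁻¹))]
    set w := ((5 * (s1 + t⁻¹) : ℝ) : ℂ) * Complex.exp ((θ : ℂ) * Complex.I) with hw
    set cc := ((s1 + t⁻¹ : ℝ) : ℂ) with hcc
    have hco : ((s1 : ℂ) + w) + ((t⁻¹ : ℝ) : ℂ) = w + cc := by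
      rw [hcc]; push_cast; ring
    rw [hco]
    have htri : ‖w‖ ≤ ‖w + cc‖ + ‖cc‖ := by
      calc ‖w‖ = ‖(w + cc) + (-cc)‖ := by ring_nf
        _ ≤ ‖w + cc‖ + ‖-cc‖ := norm_add_le _ _
        _ = ‖w + cc‖ + ‖cc‖ := by rw [norm_neg]
    have hc : ‖cc‖ = s1 + t⁻¹ := by
      rw [hcc, Complex.norm_real, Real.norm_eq_abs, abs_of_nonneg (le_of_lt hr)]
    rw [hexp, hc] at htri
    linarith
  have hptwise : ∀ θ ∈ Set.Icc (-(Real.pi / 2)) (Real.pi / 2),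
      (1 / ‖((s1 : ℂ) + ((5 * (s1 + t⁻¹) : ℝ) : ℂ) *
        Complex.exp ((θ : ℂ) * Complex.I)) + ((t⁻¹ : ℝ) : ℂ)‖) * (5 * (s1 + t⁻¹))
      ≤ (5 : ℝ) / 4 := by
    intro θ _
    have h1 := habs θ
    have h2 : (0:ℝ) < 4 * (s1 + t⁻¹) := by positivity
    have h3 : (1 / ‖((s1 : ℂ) + ((5 * (s1 + t⁻¹) : ℝ) : ℂ) *
        Complex.exp ((θ : ℂ) * Complex.I)) + ((t⁻¹ : ℝ) : ℂ)‖) ≤ 1 / (4 * (s1 + t⁻¹)) :=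
      one_div_le_one_div_of_le h2 h1
    calc (1 / ‖((s1 : ℂ) + ((5 * (s1 + t⁻¹) : ℝ) : ℂ) *
        Complex.exp ((θ : ℂ) * Complex.I)) + ((t⁻¹ : ℝ) : ℂ)‖) * (5 * (s1 + t⁻¹))
        ≤ (1 / (4 * (s1 + t⁻¹))) * (5 * (s1 + t⁻¹)) := by
          apply mul_le_mul_of_nonneg_right h3 (by positivity)
      _ = 5 / 4 := by field_simp
  have hcont : ContinuousOn (fun θ : ℝ => (1 / ‖((s1 : ℂ) +
      ((5 * (s1 + t⁻¹) : ℝ) : ℂ) * Complex.exp ((θ : ℂ) * Complex.I)) + ((t⁻¹ : ℝ) : ℂ)‖)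
      * (5 * (s1 + t⁻¹))) (Set.Icc (-(Real.pi / 2)) (Real.pi / 2)) := by
    apply ContinuousOn.mul _ continuousOn_const
    apply ContinuousOn.div continuousOn_const
    · apply Continuous.continuousOn
      apply continuous_norm.comp
      fun_prop
    · intro θ _
      have := habs θ
      have h2 : (0:ℝ) < 4 * (s1 + t⁻¹) := by positivity
      exact ne_of_gt (lt_of_lt_of_le h2 this)
  have hint1 : IntervalIntegrable _ MeasureTheory.volume (-(Real.pi / 2)) (Real.pi / 2) :=
    hcont.intervalIntegrable_of_Icc hab
  have hint2 : IntervalIntegrable (fun _ : ℝ => (5:ℝ)/4) MeasureTheory.volume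
      (-(Real.pi / 2)) (Real.pi / 2) := intervalIntegrable_const
  have hmono := intervalIntegral.integral_mono_on hab hint1 hint2 hptwise
  refine le_trans hmono ?_
  rw [intervalIntegral.integral_const]
  have hpi : Real.pi ≤ 3.15 := le_of_lt Real.pi_lt_d2
  have : (Real.pi / 2 - -(Real.pi / 2)) = Real.pi := by ring
  rw [this, smul_eq_mul]
  nlinarith


lemma l2normC_eq_norm {n : ℕ} (v : Fin n → ℂ) :
    l2normC v = ‖(WithLp.equiv 2 (Fin n → ℂ)).symm v‖ := by
  rw [EuclideanSpace.norm_eq]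
  rfl

lemma l2normC_add_le {n : ℕ} (u w : Fin n → ℂ) :
    l2normC (u + w) ≤ l2normC u + l2normC w := by
  rw [l2normC_eq_norm, l2normC_eq_norm, l2normC_eq_norm]
  exact norm_add_le (WithLp.toLp 2 u) (WithLp.toLp 2 w)

lemma l2normC_sub_le {n : ℕ} (u w : Fin n → ℂ) :
    l2normC (u - w) ≤ l2normC u + l2normC w := by
  have : u - w = u + (-w) := by ring
  rw [this]
  refine le_trans (l2normC_add_le u (-w)) ?_
  have : l2normC (-w) = l2normC w := by
    simp [l2normC]
  rw [this]

lemma l2norm_basis {p : ℕ} (e : Fin p → Fin p → ℝ) (he : ONFamily e) (k : Fin p) :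
    l2norm (e k) = 1 := by
  have h : ∑ i, e k i ^ 2 = 1 := by
    rw [← he.1 k]; apply Finset.sum_congr rfl; intros; rw [pow_two]
  rw [l2norm, h, Real.sqrt_one]

lemma specMat_mulVec_basis {p : ℕ} (e : Fin p → Fin p → ℝ) (he : ONFamily e)
    (c : Fin p → ℝ) (k : Fin p) : (specMat e c).mulVec (e k) = c k • e k := by
  funext i
  simp only [Matrix.mulVec, dotProduct, specMat, Matrix.sum_apply, Pi.smul_apply,
    Matrix.smul_apply, Matrix.vecMulVec_apply, smul_eq_mul, Finset.sum_mul]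
  rw [Finset.sum_comm]
  have hj : ∀ j, ∑ x, c j * (e j i * e j x) * e k x = c j * e j i * (∑ x, e j x * e k x) := by
    intro j
    rw [Finset.mul_sum]
    apply Finset.sum_congr rfl; intros; ring
  calc ∑ j, ∑ x, c j * (e j i * e j x) * e k x
      = ∑ j, c j * e j i * (∑ x, e j x * e k x) := Finset.sum_congr rfl (fun j _ => hj j)
    _ = c k * e k i := by
        rw [Finset.sum_eq_single k]
        · rw [he.1 k, mul_one]
        · intro j _ hjk
          rw [he.2 j k hjk, mul_zero]
        · intro h; exact absurd (Finset.mem_univ k) h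

lemma sigma_le_opNorm {p : ℕ} (e : Fin p → Fin p → ℝ) (he : ONFamily e)
    (σv : Fin p → ℝ) (hσ : ∀ j, 0 ≤ σv j) (k : Fin p) :
    σv k ≤ opNorm (specMat e σv) := by
  have h1 := l2norm_mulVec_le (specMat e σv) (e k)
  rw [specMat_mulVec_basis e he σv k, l2norm_smul, l2norm_basis e he k,
    abs_of_nonneg (hσ k)] at h1
  simpa using h1

lemma integral_mono_aux {a b c C₁ : ℝ} (hab : a ≤ b) (hc0 : 0 ≤ c)
    {ψ g : ℝ → ℂ}
    (hψ : ContinuousOn (fun x => ‖ψ x‖) (Set.Icc a b))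
    (hgc : ContinuousOn (fun x => ‖g x‖) (Set.Icc a b))
    (hgpos : ∀ x ∈ Set.Icc a b, 0 < ‖g x‖)
    (hpt : ∀ x ∈ Set.Icc a b, ‖ψ x‖ ≤ C₁ / ‖g x‖) :
    ∫ x in a..b, ‖ψ x‖ * c ≤
      C₁ * ∫ x in a..b, (1 / ‖g x‖) * c := by
  have hpt2 : ∀ x ∈ Set.Icc a b,
      ‖ψ x‖ * c ≤ C₁ * ((1 / ‖g x‖) * c) := by
    intro x hx
    have h1 : ‖ψ x‖ * c ≤ (C₁ / ‖g x‖) * c :=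
      mul_le_mul_of_nonneg_right (hpt x hx) hc0
    refine le_trans h1 (le_of_eq ?_)
    field_simp
  have hcont1 : ContinuousOn (fun x => ‖ψ x‖ * c) (Set.Icc a b) :=
    hψ.mul continuousOn_const
  have hcont2 : ContinuousOn (fun x => C₁ * ((1 / ‖g x‖) * c)) (Set.Icc a b) := by
    apply ContinuousOn.mul continuousOn_const
    apply ContinuousOn.mul _ continuousOn_const
    exact ContinuousOn.div continuousOn_const hgc (fun x hx => ne_of_gt (hgpos x hx))
  have hint1 : IntervalIntegrable _ MeasureTheory.volume a b :=
    hcont1.intervalIntegrable_of_Icc hab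
  have hint2 : IntervalIntegrable _ MeasureTheory.volume a b :=
    hcont2.intervalIntegrable_of_Icc hab
  have := intervalIntegral.integral_mono_on hab hint1 hint2 hpt2
  rwa [intervalIntegral.integral_const_mul] at this

lemma map_mulC {p : ℕ} (X Y : Matrix (Fin p) (Fin p) ℝ) :
    (X * Y).map (fun x : ℝ => (x : ℂ))
      = X.map (fun x : ℝ => (x : ℂ)) * Y.map (fun x : ℝ => (x : ℂ)) := by
  ext i j
  simp [Matrix.mul_apply, Matrix.map_apply]

lemma map_subC {p : ℕ} (X Y : Matrix (Fin p) (Fin p) ℝ) :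
    (X - Y).map (fun x : ℝ => (x : ℂ))
      = X.map (fun x : ℝ => (x : ℂ)) - Y.map (fun x : ℝ => (x : ℂ)) := by
  ext i j
  simp [Matrix.map_apply]

/-- Core spectral computation for part (i). -/
lemma resolvent_core {p : ℕ} {t : ℝ} {e : Fin p → Fin p → ℝ} {σv : Fin p → ℝ}
    (ht : 1 ≤ t) (he : ONFamily e) (hσ : ∀ j, 0 ≤ σv j)
    {z : ℂ} (hz : z ∈ contourSet t (opNorm (specMat e σv))) :
    (((specMat e σv).map (fun x : ℝ => (x : ℂ)) - z • 1) *
        specC e (fun j => ((σv j : ℂ) - z)⁻¹) = 1) ∧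
    (specC e (fun j => ((σv j : ℂ) - z)⁻¹) *
        ((specMat e σv).map (fun x : ℝ => (x : ℂ)) - z • 1) = 1) ∧
    (((specMat e fun j => Real.sqrt (σv j + t⁻¹)).map fun x : ℝ => (x : ℂ)) *
        ((specMat e σv).map (fun x : ℝ => (x : ℂ)) - z • 1)⁻¹ *
        ((specMat e fun j => Real.sqrt (σv j + t⁻¹)).map fun x : ℝ => (x : ℂ))
      = specC e (fun j => ((σv j + t⁻¹ : ℝ) : ℂ) / ((σv j : ℂ) - z))) := by
  have ht0 : 0 < t := lt_of_lt_of_le one_pos ht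
  have hne : ∀ j, ((σv j : ℂ) - z) ≠ 0 := by
    intro j
    have := key_ne ht (hσ j) (sigma_le_opNorm e he σv hσ j) hz
    exact sub_ne_zero_of_ne this
  have hA : (specMat e σv).map (fun x : ℝ => (x : ℂ)) - z • 1
      = specC e (fun j => (σv j : ℂ) - z) := by
    rw [map_specMat, smul_one_eq_specC e he z, specC_sub]
  have h1 : ((specMat e σv).map (fun x : ℝ => (x : ℂ)) - z • 1) *
      specC e (fun j => ((σv j : ℂ) - z)⁻¹) = 1 := by
    rw [hA, specC_mul e he, ← specC_one e he]
    have hfun : (fun j => ((σv j : ℂ) - z) * ((σv j : ℂ) - z)⁻¹) = fun _ : Fin p => (1 : ℂ) :=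
      funext (fun j => mul_inv_cancel₀ (hne j))
    rw [hfun]
  have h2 : specC e (fun j => ((σv j : ℂ) - z)⁻¹) *
      ((specMat e σv).map (fun x : ℝ => (x : ℂ)) - z • 1) = 1 := by
    rw [hA, specC_mul e he, ← specC_one e he]
    have hfun : (fun j => ((σv j : ℂ) - z)⁻¹ * ((σv j : ℂ) - z)) = fun _ : Fin p => (1 : ℂ) :=
      funext (fun j => inv_mul_cancel₀ (hne j))
    rw [hfun]
  refine ⟨h1, h2, ?_⟩
  rw [Matrix.inv_eq_right_inv h1]
  rw [show (specMat e fun j => Real.sqrt (σv j + t⁻¹)).map (fun x : ℝ => (x : ℂ))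
      = specC e (fun j => ((Real.sqrt (σv j + t⁻¹) : ℝ) : ℂ)) from map_specMat _ _]
  rw [specC_mul e he, specC_mul e he]
  apply congrArg (specC e)
  funext j
  have hx0 : 0 ≤ σv j + t⁻¹ := by
    have := hσ j
    have h2 : 0 < t⁻¹ := by positivity
    linarith
  have hsq : ((Real.sqrt (σv j + t⁻¹) : ℝ) : ℂ) * ((Real.sqrt (σv j + t⁻¹) : ℝ) : ℂ)
      = ((σv j + t⁻¹ : ℝ) : ℂ) := by
    rw [← Complex.ofReal_mul, Real.mul_self_sqrt hx0]
  rw [div_eq_mul_inv, ← hsq]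
  ring

lemma R_bound {p : ℕ} {t : ℝ} {e : Fin p → Fin p → ℝ} {σv : Fin p → ℝ}
    (ht : 1 ≤ t) (he : ONFamily e) (hσ : ∀ j, 0 ≤ σv j)
    {z : ℂ} (hz : z ∈ contourSet t (opNorm (specMat e σv))) (v : Fin p → ℂ) :
    l2normC ((specC e (fun j => ((σv j + t⁻¹ : ℝ) : ℂ) / ((σv j : ℂ) - z))).mulVec v)
      ≤ 4 * l2normC v := by
  apply specC_mulVec_le e he _ _ v
  intro j
  exact key_ratio ht (hσ j) (sigma_le_opNorm e he σv hσ j) hz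

lemma l2normC_neg {n : ℕ} (v : Fin n → ℂ) : l2normC (-v) = l2normC v := by
  simp [l2normC]

lemma circ_abs_lb {t s1 : ℝ} (ht : 1 ≤ t) (hs0 : 0 ≤ s1) (θ : ℝ) :
    4 * (s1 + t⁻¹) ≤ ‖((s1 : ℂ) +
      ((5 * (s1 + t⁻¹) : ℝ) : ℂ) * Complex.exp ((θ : ℂ) * Complex.I)) + ((t⁻¹ : ℝ) : ℂ)‖ := by
  have ht0 : 0 < t := lt_of_lt_of_le one_pos ht
  have hr : 0 < s1 + t⁻¹ := by positivity
  have hexp : ‖((5 * (s1 + t⁻¹) : ℝ) : ℂ) * Complex.exp ((θ : ℂ) * Complex.I)‖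
      = 5 * (s1 + t⁻¹) := by
    rw [norm_mul, Complex.norm_real, Real.norm_eq_abs, Complex.norm_exp]
    simp [abs_of_nonneg (by positivity : (0:ℝ) ≤ 5 * (s1 + t⁻¹))]
  set w := ((5 * (s1 + t⁻¹) : ℝ) : ℂ) * Complex.exp ((θ : ℂ) * Complex.I) with hw
  set cc := ((s1 + t⁻¹ : ℝ) : ℂ) with hcc
  have hco : ((s1 : ℂ) + w) + ((t⁻¹ : ℝ) : ℂ) = w + cc := by
    rw [hcc]; push_cast; ring
  rw [hco]
  have htri : ‖w‖ ≤ ‖w + cc‖ + ‖cc‖ := by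
    calc ‖w‖ = ‖(w + cc) + (-cc)‖ := by ring_nf
      _ ≤ ‖w + cc‖ + ‖-cc‖ := norm_add_le _ _
      _ = ‖w + cc‖ + ‖cc‖ := by rw [norm_neg]
  have hc : ‖cc‖ = s1 + t⁻¹ := by
    rw [hcc, Complex.norm_real, Real.norm_eq_abs, abs_of_nonneg (le_of_lt hr)]
  rw [hexp, hc] at htri
  linarith

lemma sqrt_one_alpha_le {t s1 : ℝ} (ht : 1 ≤ t) (hs0 : 0 ≤ s1) :
    Real.sqrt (1 + (5 * (s1 + t⁻¹) / (s1 + t⁻¹ / 2)) ^ 2) ≤ 11 := by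
  have h1 := alpha_ge_one ht hs0
  have h10 := alpha_le_ten ht hs0
  have : Real.sqrt (1 + (5 * (s1 + t⁻¹) / (s1 + t⁻¹ / 2)) ^ 2) ≤ Real.sqrt 121 := by
    apply Real.sqrt_le_sqrt
    nlinarith
  rw [show (121 : ℝ) = 11 ^ 2 by norm_num, Real.sqrt_sq (by norm_num : (0:ℝ) ≤ 11)] at this
  exact this

/-- The contour integral bound of part (ii). -/
lemma ci_bound {t s1 : ℝ} (ht : 1 ≤ t) (hs0 : 0 ≤ s1) (hs1 : s1 ≤ 1) :
    contourIntegralAbs t s1 (fun z => 1 / ‖z + ((t⁻¹ : ℝ) : ℂ)‖)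
      ≤ 100 * (1 + Real.log t) := by
  have ht0 : 0 < t := lt_of_lt_of_le one_pos ht
  have hL : 0 ≤ Real.log t := Real.log_nonneg ht
  have hc0 : 0 ≤ Real.sqrt (1 + (5 * (s1 + t⁻¹) / (s1 + t⁻¹ / 2)) ^ 2) := Real.sqrt_nonneg _
  have hc11 := sqrt_one_alpha_le ht hs0
  rw [contourIntegralAbs]
  have hI1 : (∫ x in (-(1 / (2 * t)))..s1,
      (fun z => 1 / ‖z + ((t⁻¹ : ℝ) : ℂ)‖)
        ((x : ℂ) + ((5 * (s1 + t⁻¹) / (s1 + t⁻¹ / 2)) * (x + 1 / (2 * t)) : ℝ) * Complex.I)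
        * Real.sqrt (1 + (5 * (s1 + t⁻¹) / (s1 + t⁻¹ / 2)) ^ 2)) ≤ 33 * (1 + Real.log t) := by
    exact seg_est ht hs0 hs1 hc0 hc11
      (g := fun x : ℝ => ((x : ℂ) +
        ((5 * (s1 + t⁻¹) / (s1 + t⁻¹ / 2)) * (x + 1 / (2 * t)) : ℝ) * Complex.I)
        + ((t⁻¹ : ℝ) : ℂ)) (by fun_prop) (fun x => by
          rw [Complex.add_re, Complex.add_re, Complex.ofReal_re, Complex.ofReal_re,
            Complex.mul_re, Complex.I_re, Complex.I_im, Complex.ofReal_re, Complex.ofReal_im]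
          ring)
  have hI2 : (∫ x in (-(1 / (2 * t)))..s1,
      (fun z => 1 / ‖z + ((t⁻¹ : ℝ) : ℂ)‖)
        ((x : ℂ) - ((5 * (s1 + t⁻¹) / (s1 + t⁻¹ / 2)) * (x + 1 / (2 * t)) : ℝ) * Complex.I)
        * Real.sqrt (1 + (5 * (s1 + t⁻¹) / (s1 + t⁻¹ / 2)) ^ 2)) ≤ 33 * (1 + Real.log t) := by
    exact seg_est ht hs0 hs1 hc0 hc11
      (g := fun x : ℝ => ((x : ℂ) -
        ((5 * (s1 + t⁻¹) / (s1 + t⁻¹ / 2)) * (x + 1 / (2 * t)) : ℝ) * Complex.I)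
        + ((t⁻¹ : ℝ) : ℂ)) (by fun_prop) (fun x => by
          rw [Complex.add_re, Complex.sub_re, Complex.ofReal_re, Complex.ofReal_re,
            Complex.mul_re, Complex.I_re, Complex.I_im, Complex.ofReal_re, Complex.ofReal_im]
          ring)
  have hI3 : (∫ θ in (-(Real.pi / 2))..(Real.pi / 2),
      (fun z => 1 / ‖z + ((t⁻¹ : ℝ) : ℂ)‖)
        ((s1 : ℂ) + ((5 * (s1 + t⁻¹) : ℝ) : ℂ) * Complex.exp ((θ : ℂ) * Complex.I))
        * (5 * (s1 + t⁻¹))) ≤ 4 := circ_est ht hs0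
  linarith

lemma ci_phi_bound {t s1 : ℝ} (ht : 1 ≤ t) (hs0 : 0 ≤ s1) (hs1 : s1 ≤ 1)
    (C₁ : ℝ) (φ : ℂ → ℂ)
    (hex : ∃ U : Set ℂ, IsOpen U ∧ contourSet t s1 ⊆ U ∧ DifferentiableOn ℂ φ U)
    (hb : ∀ z ∈ contourSet t s1,
      ‖φ z‖ ≤ C₁ / ‖z + ((t⁻¹ : ℝ) : ℂ)‖) :
    contourIntegralAbs t s1 (fun z => ‖φ z‖) ≤ 100 * C₁ * (1 + Real.log t) := by
  obtain ⟨U, hUo, hUsub, hφ⟩ := hex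
  have ht0 : 0 < t := lt_of_lt_of_le one_pos ht
  have htinv : 0 < t⁻¹ := by positivity
  have hL : 0 ≤ Real.log t := Real.log_nonneg ht
  set a := -(1 / (2 * t)) with ha
  have hab : a ≤ s1 := by
    have : 0 < 1 / (2 * t) := by positivity
    simp only [ha]; linarith
  have habpi : -(Real.pi / 2) ≤ Real.pi / 2 := by have := Real.pi_pos; linarith
  set α := 5 * (s1 + t⁻¹) / (s1 + t⁻¹ / 2) with hα
  set c := Real.sqrt (1 + α ^ 2) with hcdef
  have hc0 : 0 ≤ c := Real.sqrt_nonneg _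
  have hr5 : 0 ≤ 5 * (s1 + t⁻¹) := by positivity
  -- parametrizations
  set zp : ℝ → ℂ := fun x => (x : ℂ) + ((α * (x + 1 / (2 * t))) : ℝ) * Complex.I with hzp
  set zm : ℝ → ℂ := fun x => (x : ℂ) - ((α * (x + 1 / (2 * t))) : ℝ) * Complex.I with hzm
  set zc : ℝ → ℂ := fun θ =>
    (s1 : ℂ) + ((5 * (s1 + t⁻¹) : ℝ) : ℂ) * Complex.exp ((θ : ℂ) * Complex.I) with hzc
  have memp : ∀ x ∈ Set.Icc a s1, zp x ∈ contourSet t s1 := by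
    intro x hx
    exact Or.inl (Or.inl ⟨x, hx, rfl⟩)
  have memm : ∀ x ∈ Set.Icc a s1, zm x ∈ contourSet t s1 := by
    intro x hx
    exact Or.inl (Or.inr ⟨x, hx, rfl⟩)
  have memc : ∀ θ ∈ Set.Icc (-(Real.pi / 2)) (Real.pi / 2), zc θ ∈ contourSet t s1 := by
    intro θ hθ
    refine Or.inr ⟨?_, ?_⟩
    · rw [hzc]
      rw [add_sub_cancel_left]
      rw [norm_mul, Complex.norm_real, Real.norm_eq_abs, Complex.norm_exp]
      simp [abs_of_nonneg hr5]
    · rw [hzc]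
      have hre : ((s1 : ℂ) + ((5 * (s1 + t⁻¹) : ℝ) : ℂ) *
          Complex.exp ((θ : ℂ) * Complex.I)).re = s1 + 5 * (s1 + t⁻¹) * Real.cos θ := by
        rw [Complex.add_re, Complex.ofReal_re, Complex.mul_re, Complex.ofReal_re,
          Complex.ofReal_im, Complex.exp_ofReal_mul_I_re]
        ring
      rw [hre]
      have hcos : 0 ≤ Real.cos θ := Real.cos_nonneg_of_mem_Icc ⟨hθ.1, hθ.2⟩
      nlinarith
  -- positivity of denominators
  have hxpos : ∀ x ∈ Set.Icc a s1, 0 < x + t⁻¹ := by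
    intro x hx
    have h1 : -(1 / (2 * t)) ≤ x := hx.1
    have h2 : -(1 / (2 * t)) + t⁻¹ = 1 / (2 * t) := by field_simp; ring
    have h3 : 0 < 1 / (2 * t) := by positivity
    linarith
  have hrep : ∀ x : ℝ, (zp x + ((t⁻¹ : ℝ) : ℂ)).re = x + t⁻¹ := by
    intro x
    rw [hzp]
    rw [Complex.add_re, Complex.add_re, Complex.ofReal_re, Complex.ofReal_re,
      Complex.mul_re, Complex.I_re, Complex.I_im, Complex.ofReal_re, Complex.ofReal_im]
    ring
  have hrem : ∀ x : ℝ, (zm x + ((t⁻¹ : ℝ) : ℂ)).re = x + t⁻¹ := by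
    intro x
    rw [hzm]
    rw [Complex.add_re, Complex.sub_re, Complex.ofReal_re, Complex.ofReal_re,
      Complex.mul_re, Complex.I_re, Complex.I_im, Complex.ofReal_re, Complex.ofReal_im]
    ring
  have habsp : ∀ x ∈ Set.Icc a s1, x + t⁻¹ ≤ ‖zp x + ((t⁻¹ : ℝ) : ℂ)‖ := by
    intro x hx
    calc x + t⁻¹ = (zp x + ((t⁻¹ : ℝ) : ℂ)).re := (hrep x).symm
      _ ≤ |(zp x + ((t⁻¹ : ℝ) : ℂ)).re| := le_abs_self _
      _ ≤ _ := Complex.abs_re_le_norm _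
  have habsm : ∀ x ∈ Set.Icc a s1, x + t⁻¹ ≤ ‖zm x + ((t⁻¹ : ℝ) : ℂ)‖ := by
    intro x hx
    calc x + t⁻¹ = (zm x + ((t⁻¹ : ℝ) : ℂ)).re := (hrem x).symm
      _ ≤ |(zm x + ((t⁻¹ : ℝ) : ℂ)).re| := le_abs_self _
      _ ≤ _ := Complex.abs_re_le_norm _
  have hposp : ∀ x ∈ Set.Icc a s1, 0 < ‖zp x + ((t⁻¹ : ℝ) : ℂ)‖ :=
    fun x hx => lt_of_lt_of_le (hxpos x hx) (habsp x hx)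
  have hposm : ∀ x ∈ Set.Icc a s1, 0 < ‖zm x + ((t⁻¹ : ℝ) : ℂ)‖ :=
    fun x hx => lt_of_lt_of_le (hxpos x hx) (habsm x hx)
  have hposc : ∀ θ ∈ Set.Icc (-(Real.pi / 2)) (Real.pi / 2),
      0 < ‖zc θ + ((t⁻¹ : ℝ) : ℂ)‖ := by
    intro θ _
    have := circ_abs_lb ht hs0 θ
    have h4 : (0:ℝ) < 4 * (s1 + t⁻¹) := by positivity
    exact lt_of_lt_of_le h4 this
  -- continuity
  have hzpc : Continuous zp := by rw [hzp]; fun_prop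
  have hzmc : Continuous zm := by rw [hzm]; fun_prop
  have hzcc : Continuous zc := by rw [hzc]; fun_prop
  have hφc : ContinuousOn φ U := hφ.continuousOn
  have hψp : ContinuousOn (fun x => ‖φ (zp x)‖) (Set.Icc a s1) :=
    continuous_norm.comp_continuousOn
      (hφc.comp hzpc.continuousOn (fun x hx => hUsub (memp x hx)))
  have hψm : ContinuousOn (fun x => ‖φ (zm x)‖) (Set.Icc a s1) :=
    continuous_norm.comp_continuousOn
      (hφc.comp hzmc.continuousOn (fun x hx => hUsub (memm x hx)))
  have hψc : ContinuousOn (fun θ => ‖φ (zc θ)‖)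
      (Set.Icc (-(Real.pi / 2)) (Real.pi / 2)) :=
    continuous_norm.comp_continuousOn
      (hφc.comp hzcc.continuousOn (fun θ hθ => hUsub (memc θ hθ)))
  have hgcp : ContinuousOn (fun x => ‖zp x + ((t⁻¹ : ℝ) : ℂ)‖) (Set.Icc a s1) :=
    (continuous_norm.comp (by fun_prop)).continuousOn
  have hgcm : ContinuousOn (fun x => ‖zm x + ((t⁻¹ : ℝ) : ℂ)‖) (Set.Icc a s1) :=
    (continuous_norm.comp (by fun_prop)).continuousOn
  have hgcc : ContinuousOn (fun θ => ‖zc θ + ((t⁻¹ : ℝ) : ℂ)‖)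
      (Set.Icc (-(Real.pi / 2)) (Real.pi / 2)) :=
    (continuous_norm.comp (by fun_prop)).continuousOn
  -- the three comparisons
  have hJ1 : (∫ x in a..s1, ‖φ (zp x)‖ * c)
      ≤ C₁ * ∫ x in a..s1, (1 / ‖zp x + ((t⁻¹ : ℝ) : ℂ)‖) * c :=
    integral_mono_aux hab hc0 hψp hgcp hposp (fun x hx => hb (zp x) (memp x hx))
  have hJ2 : (∫ x in a..s1, ‖φ (zm x)‖ * c)
      ≤ C₁ * ∫ x in a..s1, (1 / ‖zm x + ((t⁻¹ : ℝ) : ℂ)‖) * c :=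
    integral_mono_aux hab hc0 hψm hgcm hposm (fun x hx => hb (zm x) (memm x hx))
  have hJ3 : (∫ θ in (-(Real.pi / 2))..(Real.pi / 2),
        ‖φ (zc θ)‖ * (5 * (s1 + t⁻¹)))
      ≤ C₁ * ∫ θ in (-(Real.pi / 2))..(Real.pi / 2),
        (1 / ‖zc θ + ((t⁻¹ : ℝ) : ℂ)‖) * (5 * (s1 + t⁻¹)) :=
    integral_mono_aux habpi hr5 hψc hgcc hposc (fun θ hθ => hb (zc θ) (memc θ hθ))
  -- C₁ is nonnegative
  have hC₁ : 0 ≤ C₁ := by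
    have hz0 := memc 0 ⟨by linarith [Real.pi_pos], by linarith [Real.pi_pos]⟩
    have hbz := hb (zc 0) hz0
    have hd := hposc 0 ⟨by linarith [Real.pi_pos], by linarith [Real.pi_pos]⟩
    by_contra hneg
    push_neg at hneg
    have : C₁ / ‖zc 0 + ((t⁻¹ : ℝ) : ℂ)‖ < 0 := div_neg_of_neg_of_pos hneg hd
    linarith [norm_nonneg (φ (zc 0))]
  -- combine
  have hsum := add_le_add (add_le_add hJ1 hJ2) hJ3
  have h100 := ci_bound ht hs0 hs1
  rw [contourIntegralAbs] at h100 ⊢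
  refine le_trans hsum ?_
  nlinarith [h100, hC₁]

/-- there is an absolute constant `C > 1` such that, for every `t ≥ 1` and
every symmetric PSD `Σ = ∑ σ_j e_j e_jᵀ` with `σ₁ = ‖Σ‖_op ≤ 1`, writing
`Σ_t := Σ + t⁻¹I`: (i) for every `z ∈ C_t`, `Σ − zI` is invertible and
`‖Σ_t^{1/2}(Σ − zI)⁻¹Σ_t^{1/2}‖_op ≤ C`; (ii) `∮_{C_t} |dz|/|z+t⁻¹| ≤ C(1+log t)`, hence
any `φ_t` holomorphic near `C_t` with `|φ_t(z)| ≤ C₁/|z+t⁻¹|` on `C_t` satisfies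
`∮_{C_t}|φ_t(z)||dz| ≤ C·C₁·(1+log t)`; (iii) if in addition `Σ̂` is symmetric PSD with
`‖Σ_t^{−1/2}(Σ̂−Σ)Σ_t^{−1/2}‖_op ≤ □ < 1/9`, then for every `z ∈ C_t`, `Σ̂ − zI` is
invertible and `‖Σ_t^{1/2}(Σ̂ − zI)⁻¹Σ_t^{1/2}‖_op ≤ C`. -/
theorem contour_resolvent_bounds :
    ∃ C : ℝ, 1 < C ∧
      ∀ (p : ℕ) (t : ℝ) (e : Fin p → Fin p → ℝ) (σv : Fin p → ℝ),
        1 ≤ t → ONFamily e → (∀ j, 0 ≤ σv j) →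
        opNorm (specMat e σv) ≤ 1 →
        ((∀ z ∈ contourSet t (opNorm (specMat e σv)),
          IsUnit ((specMat e σv).map (fun x : ℝ => (x : ℂ)) - z • 1) ∧
          opNormC (((specMat e fun j => Real.sqrt (σv j + t⁻¹)).map fun x : ℝ => (x : ℂ)) *
              ((specMat e σv).map (fun x : ℝ => (x : ℂ)) - z • 1)⁻¹ *
              ((specMat e fun j => Real.sqrt (σv j + t⁻¹)).map fun x : ℝ => (x : ℂ))) ≤ C) ∧
        (contourIntegralAbs t (opNorm (specMat e σv))
            (fun z => 1 / ‖z + ((t⁻¹ : ℝ) : ℂ)‖) ≤ C * (1 + Real.log t) ∧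
          ∀ (C₁ : ℝ) (φ : ℂ → ℂ),
            (∃ U : Set ℂ, IsOpen U ∧ contourSet t (opNorm (specMat e σv)) ⊆ U ∧
              DifferentiableOn ℂ φ U) →
            (∀ z ∈ contourSet t (opNorm (specMat e σv)),
              ‖φ z‖ ≤ C₁ / ‖z + ((t⁻¹ : ℝ) : ℂ)‖) →
            contourIntegralAbs t (opNorm (specMat e σv)) (fun z => ‖φ z‖) ≤
              C * C₁ * (1 + Real.log t)) ∧
        ∀ (Sigmahat : Matrix (Fin p) (Fin p) ℝ) (Box : ℝ),
          Sigmahat.PosSemidef → Box < 1 / 9 →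
          opNorm ((specMat e fun j => (Real.sqrt (σv j + t⁻¹))⁻¹) *
              (Sigmahat - specMat e σv) *
              (specMat e fun j => (Real.sqrt (σv j + t⁻¹))⁻¹)) ≤ Box →
          ∀ z ∈ contourSet t (opNorm (specMat e σv)),
            IsUnit (Sigmahat.map (fun x : ℝ => (x : ℂ)) - z • 1) ∧
            opNormC (((specMat e fun j => Real.sqrt (σv j + t⁻¹)).map fun x : ℝ => (x : ℂ)) *
                (Sigmahat.map (fun x : ℝ => (x : ℂ)) - z • 1)⁻¹ *
                ((specMat e fun j => Real.sqrt (σv j + t⁻¹)).map fun x : ℝ => (x : ℂ))) ≤ C) := by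
  refine ⟨100, by norm_num, ?_⟩
  intro p t e σv ht he hσ hop
  have ht0 : 0 < t := lt_of_lt_of_le one_pos ht
  have htinv : 0 < t⁻¹ := by positivity
  have hs10 : 0 ≤ opNorm (specMat e σv) := opNorm_nonneg _
  have hL : 0 ≤ Real.log t := Real.log_nonneg ht
  refine ⟨?_, ⟨ci_bound ht hs10 hop, fun C₁ φ hex hb => ci_phi_bound ht hs10 hop C₁ φ hex hb⟩, ?_⟩
  · -- part (i)
    intro z hz
    obtain ⟨h1, h2, h3⟩ := resolvent_core ht he hσ hz
    refine ⟨⟨⟨_, _, h1, h2⟩, rfl⟩, ?_⟩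
    rw [h3]
    refine le_trans (opNormC_le _ (by norm_num) (fun v => R_bound ht he hσ hz v)) (by norm_num)
  · -- part (iii)
    intro Sigmahat Box hPSD hBoxlt hB z hz
    obtain ⟨h1, h2, h3⟩ := resolvent_core ht he hσ hz
    have hne : ∀ j, ((σv j : ℂ) - z) ≠ 0 := by
      intro j
      exact sub_ne_zero_of_ne (key_ne ht (hσ j) (sigma_le_opNorm e he σv hσ j) hz)
    have hxpos : ∀ j, 0 < σv j + t⁻¹ := by
      intro j; have := hσ j; linarith
    have hxne : ∀ j, ((σv j + t⁻¹ : ℝ) : ℂ) ≠ 0 := by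
      intro j
      exact_mod_cast ne_of_gt (hxpos j)
    set sq : Fin p → ℝ := fun j => Real.sqrt (σv j + t⁻¹) with hsqdef
    have hsqpos : ∀ j, 0 < sq j := fun j => Real.sqrt_pos.mpr (hxpos j)
    have hsqsq : ∀ j, ((sq j : ℝ) : ℂ) * ((sq j : ℝ) : ℂ) = ((σv j + t⁻¹ : ℝ) : ℂ) := by
      intro j
      rw [← Complex.ofReal_mul, Real.mul_self_sqrt (le_of_lt (hxpos j))]
    set S : Matrix (Fin p) (Fin p) ℂ := specC e (fun j => ((sq j : ℝ) : ℂ)) with hSdef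
    set Sm : Matrix (Fin p) (Fin p) ℂ := specC e (fun j => (((sq j)⁻¹ : ℝ) : ℂ)) with hSmdef
    have hSSm : S * Sm = 1 := by
      rw [hSdef, hSmdef, specC_mul e he, ← specC_one e he]
      apply congrArg (specC e)
      funext j
      rw [← Complex.ofReal_mul, mul_inv_cancel₀ (ne_of_gt (hsqpos j)), Complex.ofReal_one]
    have hSmS : Sm * S = 1 := by
      rw [hSdef, hSmdef, specC_mul e he, ← specC_one e he]
      apply congrArg (specC e)
      funext j
      rw [← Complex.ofReal_mul, inv_mul_cancel₀ (ne_of_gt (hsqpos j)), Complex.ofReal_one]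
    set R : Matrix (Fin p) (Fin p) ℂ :=
      specC e (fun j => ((σv j + t⁻¹ : ℝ) : ℂ) / ((σv j : ℂ) - z)) with hRdef
    set D : Matrix (Fin p) (Fin p) ℂ :=
      specC e (fun j => ((σv j : ℂ) - z) / ((σv j + t⁻¹ : ℝ) : ℂ)) with hDdef
    have hDR : D * R = 1 := by
      rw [hDdef, hRdef, specC_mul e he, ← specC_one e he]
      apply congrArg (specC e)
      funext j
      rw [div_mul_div_comm, mul_comm ((σv j : ℂ) - z) (((σv j + t⁻¹ : ℝ) : ℂ))]
      exact div_self (mul_ne_zero (hxne j) (hne j))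
    have hRD : R * D = 1 := by
      rw [hRdef, hDdef, specC_mul e he, ← specC_one e he]
      apply congrArg (specC e)
      funext j
      rw [div_mul_div_comm, mul_comm (((σv j + t⁻¹ : ℝ) : ℂ)) ((σv j : ℂ) - z)]
      exact div_self (mul_ne_zero (hne j) (hxne j))
    set Ec2 : Matrix (Fin p) (Fin p) ℂ :=
      ((specMat e fun j => (Real.sqrt (σv j + t⁻¹))⁻¹) * (Sigmahat - specMat e σv) *
        (specMat e fun j => (Real.sqrt (σv j + t⁻¹))⁻¹)).map (fun x : ℝ => (x : ℂ))
      with hEdef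
    have hBox0 : 0 ≤ Box := le_trans (opNorm_nonneg _) hB
    have hEb : ∀ v, l2normC (Ec2.mulVec v) ≤ Box * l2normC v := by
      intro v
      refine le_trans (l2normC_map_mulVec_le _ v) ?_
      exact mul_le_mul_of_nonneg_right hB (l2normC_nonneg v)
    have hNb : ∀ v, l2normC ((R * Ec2).mulVec v) ≤ (4 * Box) * l2normC v := by
      intro v
      rw [← Matrix.mulVec_mulVec]
      calc l2normC (R.mulVec (Ec2.mulVec v)) ≤ 4 * l2normC (Ec2.mulVec v) :=
            R_bound ht he hσ hz _
        _ ≤ 4 * (Box * l2normC v) :=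
            mul_le_mul_of_nonneg_left (hEb v) (by norm_num)
        _ = (4 * Box) * l2normC v := by ring
    have hdet : (1 + R * Ec2).det ≠ 0 := by
      intro h0
      obtain ⟨v, hv0, hveq⟩ := (Matrix.exists_mulVec_eq_zero_iff).mpr h0
      rw [Matrix.add_mulVec, Matrix.one_mulVec] at hveq
      have hveq2 : v = -((R * Ec2).mulVec v) := eq_neg_of_add_eq_zero_left hveq
      have hnorm : l2normC v ≤ (4 * Box) * l2normC v := by
        calc l2normC v = l2normC (-((R * Ec2).mulVec v)) := by rw [← hveq2]
          _ = l2normC ((R * Ec2).mulVec v) := l2normC_neg _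
          _ ≤ (4 * Box) * l2normC v := hNb v
      have hzero : l2normC v = 0 := by
        nlinarith [l2normC_nonneg v]
      exact hv0 (l2normC_eq_zero hzero)
    have hdetunit : IsUnit (1 + R * Ec2).det := isUnit_iff_ne_zero.mpr hdet
    set G : Matrix (Fin p) (Fin p) ℂ := (1 + R * Ec2)⁻¹ with hGdef
    have hG1 : (1 + R * Ec2) * G = 1 := Matrix.mul_nonsing_inv _ hdetunit
    have hG2 : G * (1 + R * Ec2) = 1 := Matrix.nonsing_inv_mul _ hdetunit
    have hGb : ∀ u, l2normC (G.mulVec u) ≤ (9 / 5 : ℝ) * l2normC u := by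
      intro u
      set w := G.mulVec u with hwdef
      have hu : u = w + (R * Ec2).mulVec w := by
        have h5 : (1 + R * Ec2).mulVec (G.mulVec u) = u := by
          rw [Matrix.mulVec_mulVec, hG1, Matrix.one_mulVec]
        rw [Matrix.add_mulVec, Matrix.one_mulVec] at h5
        exact h5.symm
      have hsub : u - (R * Ec2).mulVec w = w := by rw [hu]; abel
      have hw1 : l2normC w ≤ l2normC u + (4 * Box) * l2normC w := by
        calc l2normC w = l2normC (u - (R * Ec2).mulVec w) := by rw [hsub]
          _ ≤ l2normC u + l2normC ((R * Ec2).mulVec w) := l2normC_sub_le _ _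
          _ ≤ l2normC u + (4 * Box) * l2normC w := by linarith [hNb w]
      nlinarith [l2normC_nonneg w, l2normC_nonneg u]
    -- matrix identity
    have hSES : S * Ec2 * S
        = Sigmahat.map (fun x : ℝ => (x : ℂ)) - (specMat e σv).map (fun x : ℝ => (x : ℂ)) := by
      have hSm' : (specMat e fun j => (Real.sqrt (σv j + t⁻¹))⁻¹).map (fun x : ℝ => (x : ℂ))
          = Sm := map_specMat _ _
      rw [hEdef, map_mulC, map_mulC, map_subC, hSm']
      calc S * (Sm * (Sigmahat.map (fun x : ℝ => (x : ℂ))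
              - (specMat e σv).map (fun x : ℝ => (x : ℂ))) * Sm) * S
          = (S * Sm) * (Sigmahat.map (fun x : ℝ => (x : ℂ))
              - (specMat e σv).map (fun x : ℝ => (x : ℂ))) * (Sm * S) := by
            noncomm_ring
        _ = _ := by rw [hSSm, hSmS, one_mul, mul_one]
    have hSDS : S * D * S = (specMat e σv).map (fun x : ℝ => (x : ℂ)) - z • 1 := by
      rw [hSdef, hDdef, specC_mul e he, specC_mul e he]
      rw [map_specMat, smul_one_eq_specC e he z, specC_sub]
      apply congrArg (specC e)
      funext j
      rw [div_eq_mul_inv]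
      rw [show ((sq j : ℝ) : ℂ) * (((σv j : ℂ) - z) * (((σv j + t⁻¹ : ℝ) : ℂ))⁻¹) *
          ((sq j : ℝ) : ℂ) = (((sq j : ℝ) : ℂ) * ((sq j : ℝ) : ℂ)) *
          (((σv j + t⁻¹ : ℝ) : ℂ))⁻¹ * ((σv j : ℂ) - z) from by ring]
      rw [hsqsq j, mul_inv_cancel₀ (hxne j), one_mul]
    have hfact : Sigmahat.map (fun x : ℝ => (x : ℂ)) - z • 1
        = S * D * (1 + R * Ec2) * S := by
      have hexp : S * D * (1 + R * Ec2) * S = S * D * S + S * ((D * R) * Ec2) * S := by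
        noncomm_ring
      rw [hexp, hDR, one_mul, hSDS, hSES]
      abel
    set B : Matrix (Fin p) (Fin p) ℂ := Sm * (G * (R * Sm)) with hBdef
    have hstep1 : S * (Sm * (G * (R * Sm))) = G * (R * Sm) := by
      rw [← mul_assoc, hSSm, one_mul]
    have hstep2 : (1 + R * Ec2) * (G * (R * Sm)) = R * Sm := by
      rw [← mul_assoc, hG1, one_mul]
    have hstep3 : D * (R * Sm) = Sm := by
      rw [← mul_assoc, hDR, one_mul]
    have hright : (Sigmahat.map (fun x : ℝ => (x : ℂ)) - z • 1) * B = 1 := by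
      rw [hfact, hBdef]
      calc S * D * (1 + R * Ec2) * S * (Sm * (G * (R * Sm)))
          = S * (D * ((1 + R * Ec2) * (S * (Sm * (G * (R * Sm)))))) := by
            simp only [mul_assoc]
        _ = S * (D * ((1 + R * Ec2) * (G * (R * Sm)))) := by rw [hstep1]
        _ = S * (D * (R * Sm)) := by rw [hstep2]
        _ = S * Sm := by rw [hstep3]
        _ = 1 := hSSm
    have hleft : B * (Sigmahat.map (fun x : ℝ => (x : ℂ)) - z • 1) = 1 :=
      mul_eq_one_comm.mp hright
    refine ⟨⟨⟨_, B, hright, hleft⟩, rfl⟩, ?_⟩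
    rw [Matrix.inv_eq_right_inv hright]
    have htarget : ((specMat e fun j => Real.sqrt (σv j + t⁻¹)).map fun x : ℝ => (x : ℂ)) * B *
        ((specMat e fun j => Real.sqrt (σv j + t⁻¹)).map fun x : ℝ => (x : ℂ)) = G * R := by
      have hS' : (specMat e fun j => Real.sqrt (σv j + t⁻¹)).map (fun x : ℝ => (x : ℂ)) = S :=
        map_specMat _ _
      rw [hS', hBdef]
      calc S * (Sm * (G * (R * Sm))) * S = (S * Sm) * (G * (R * (Sm * S))) := by
            simp only [mul_assoc]
        _ = (S * Sm) * (G * (R * 1)) := by rw [hSmS]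
        _ = G * R := by rw [hSSm, mul_one, one_mul]
    rw [htarget]
    have hGR : ∀ v, l2normC ((G * R).mulVec v) ≤ (36 / 5 : ℝ) * l2normC v := by
      intro v
      rw [← Matrix.mulVec_mulVec]
      calc l2normC (G.mulVec (R.mulVec v)) ≤ (9 / 5) * l2normC (R.mulVec v) := hGb _
        _ ≤ (9 / 5) * (4 * l2normC v) :=
            mul_le_mul_of_nonneg_left (R_bound ht he hσ hz v) (by norm_num)
        _ = (36 / 5) * l2normC v := by ring
    exact le_trans (opNormC_le _ (by norm_num) hGR) (by norm_num)


end SpecFSD10
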